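/- Let p₁, …, p_k be prime numbers, r₁, …, r_k positive integers with k ≥ 1, and R = (Z/p₁^{r₁}) × ⋯ × (Z/p_k^{r_k}). Then χ(Γ(R)) = ω(Γ(R)). -/

import Mathlib

/-- Beck's zero-divisor graph `Γ₀(R)`: vertices are all elements of `R`, and two
distinct vertices `x`, `y` are adjacent iff `x * y = 0`. -/
def gammaZero (R : Type*) [CommRing R] : SimpleGraph R where
  Adj x y := x ≠ y ∧ x * y = 0
  symm := ⟨fun x y h => ⟨h.1.symm, by rw [mul_comm]; exact h.2⟩⟩
  loopless := ⟨fun x h => h.1 rfl⟩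

/-- The set `Z(R) \ {0}` of nonzero zero-divisors of `R`. -/
def zdStar (R : Type*) [CommRing R] : Set R :=
  {x | x ≠ 0 ∧ ∃ y, y ≠ 0 ∧ x * y = 0}

/-- The Anderson–Livingston zero-divisor graph `Γ(R)`: vertices are the nonzero
zero-divisors of `R`, and two distinct vertices `x`, `y` are adjacent iff `x * y = 0`.
It is the subgraph of `Γ₀(R)` induced on `Z(R) \ {0}`. -/
def gammaGraph (R : Type*) [CommRing R] : SimpleGraph (zdStar R) :=
  (gammaZero R).induce (zdStar R)

/-- The clique number of a graph, as an extended natural number: the least upper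
bound of the sizes of (finite) cliques in `G`. -/
noncomputable def cliqueNumE {V : Type*} (G : SimpleGraph V) : ℕ∞ :=
  ⨆ (s : Finset V) (_ : G.IsClique (s : Set V)), (s.card : ℕ∞)

section NatAux
variable {p : ℕ}

lemma cn_high_or_high (hp : p.Prime) {r a b : ℕ} (hab : p ^ r ∣ a * b) :
    p ^ r ∣ a * a ∨ p ^ r ∣ b * b := by
  haveI : Fact p.Prime := ⟨hp⟩
  rcases eq_or_ne a 0 with rfl | ha
  · left; simp
  rcases eq_or_ne b 0 with rfl | hb
  · right; simp
  rw [padicValNat_dvd_iff_le (mul_ne_zero ha hb), padicValNat.mul ha hb] at hab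
  rcases le_total (padicValNat p a) (padicValNat p b) with h | h
  · right; rw [padicValNat_dvd_iff_le (mul_ne_zero hb hb), padicValNat.mul hb hb]; omega
  · left; rw [padicValNat_dvd_iff_le (mul_ne_zero ha ha), padicValNat.mul ha ha]; omega

lemma cn_high_mul_high (hp : p.Prime) {r a b : ℕ} (ha : p ^ r ∣ a * a)
    (hb : p ^ r ∣ b * b) : p ^ r ∣ a * b := by
  haveI : Fact p.Prime := ⟨hp⟩
  rcases eq_or_ne a 0 with rfl | ha0
  · simp
  rcases eq_or_ne b 0 with rfl | hb0
  · simp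
  rw [padicValNat_dvd_iff_le (mul_ne_zero ha0 ha0), padicValNat.mul ha0 ha0] at ha
  rw [padicValNat_dvd_iff_le (mul_ne_zero hb0 hb0), padicValNat.mul hb0 hb0] at hb
  rw [padicValNat_dvd_iff_le (mul_ne_zero ha0 hb0), padicValNat.mul ha0 hb0]; omega

lemma cn_high_mul_pow (hp : p.Prime) {r a c : ℕ} (ha : p ^ r ∣ a * a)
    (hc : r ≤ 2 * c + 1) : p ^ r ∣ a * p ^ c := by
  haveI : Fact p.Prime := ⟨hp⟩
  rcases eq_or_ne a 0 with rfl | ha0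
  · simp
  have hpc : p ^ c ≠ 0 := pow_ne_zero _ hp.ne_zero
  rw [padicValNat_dvd_iff_le (mul_ne_zero ha0 ha0), padicValNat.mul ha0 ha0] at ha
  rw [padicValNat_dvd_iff_le (mul_ne_zero ha0 hpc), padicValNat.mul ha0 hpc,
    padicValNat.prime_pow]
  omega

lemma cn_high_of_mul_pow (hp : p.Prime) {r a c : ℕ} (hc : 2 * c ≤ r)
    (h : p ^ r ∣ a * p ^ c) : p ^ r ∣ a * a := by
  haveI : Fact p.Prime := ⟨hp⟩
  rcases eq_or_ne a 0 with rfl | ha0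
  · simp
  have hpc : p ^ c ≠ 0 := pow_ne_zero _ hp.ne_zero
  rw [padicValNat_dvd_iff_le (mul_ne_zero ha0 hpc), padicValNat.mul ha0 hpc,
    padicValNat.prime_pow] at h
  rw [padicValNat_dvd_iff_le (mul_ne_zero ha0 ha0), padicValNat.mul ha0 ha0]; omega

end NatAux

section ZModAux
variable {p r : ℕ}

lemma zmod_mul_eq_zero_iff {n : ℕ} [NeZero n] (x y : ZMod n) :
    x * y = 0 ↔ n ∣ x.val * y.val := by
  rw [← ZMod.natCast_eq_zero_iff, Nat.cast_mul, ZMod.natCast_zmod_val,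
    ZMod.natCast_zmod_val]

lemma z_neZero (hp : p.Prime) : NeZero (p ^ r) := ⟨pow_ne_zero _ hp.ne_zero⟩

lemma z_high_or_high (hp : p.Prime) {x y : ZMod (p ^ r)} (h : x * y = 0) :
    x * x = 0 ∨ y * y = 0 := by
  haveI := z_neZero (r := r) hp
  rw [zmod_mul_eq_zero_iff] at h ⊢
  rw [zmod_mul_eq_zero_iff (n := p ^ r)]
  exact cn_high_or_high hp h

lemma z_high_mul_high (hp : p.Prime) {x y : ZMod (p ^ r)} (hx : x * x = 0)
    (hy : y * y = 0) : x * y = 0 := by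
  haveI := z_neZero (r := r) hp
  rw [zmod_mul_eq_zero_iff] at hx hy ⊢
  exact cn_high_mul_high hp hx hy

lemma z_val_pow (hp : p.Prime) (hr : 0 < r) {c : ℕ} (hc : c < r) :
    ((p : ZMod (p ^ r)) ^ c).val = p ^ c := by
  haveI := z_neZero (r := r) hp
  rw [← Nat.cast_pow, ZMod.val_natCast, Nat.mod_eq_of_lt]
  exact Nat.pow_lt_pow_right hp.one_lt hc

lemma z_high_mul_pow (hp : p.Prime) (hr : 0 < r) {x : ZMod (p ^ r)}
    (hx : x * x = 0) : x * (p : ZMod (p ^ r)) ^ (r / 2) = 0 := by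
  haveI := z_neZero (r := r) hp
  rw [zmod_mul_eq_zero_iff] at hx ⊢
  rw [z_val_pow hp hr (Nat.div_lt_self hr one_lt_two)]
  exact cn_high_mul_pow hp hx (by omega)

lemma z_high_of_mul_pow (hp : p.Prime) (hr : 0 < r) {x : ZMod (p ^ r)}
    (h : x * (p : ZMod (p ^ r)) ^ (r / 2) = 0) : x * x = 0 := by
  haveI := z_neZero (r := r) hp
  rw [zmod_mul_eq_zero_iff] at h ⊢
  rw [z_val_pow hp hr (Nat.div_lt_self hr one_lt_two)] at h
  exact cn_high_of_mul_pow hp (by omega) h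

lemma z_pow_ne_zero (hp : p.Prime) {c : ℕ} (hc : c < r) :
    (p : ZMod (p ^ r)) ^ c ≠ 0 := by
  rw [← Nat.cast_pow, Ne, ZMod.natCast_eq_zero_iff]
  intro hdvd
  have := Nat.le_of_dvd (pow_pos hp.pos c) hdvd
  exact absurd (Nat.pow_lt_pow_right hp.one_lt hc) (not_lt.mpr this)

lemma z_pow_eq_zero (hp : p.Prime) {c : ℕ} (hc : r ≤ c) :
    (p : ZMod (p ^ r)) ^ c = 0 := by
  rw [← Nat.cast_pow, ZMod.natCast_eq_zero_iff]
  exact pow_dvd_pow p hc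

lemma z_low_of_r_eq_one (hp : p.Prime) (hr : r = 1) {x : ZMod (p ^ r)}
    (hx : x * x = 0) : x = 0 := by
  haveI := z_neZero (r := r) hp
  subst hr
  rw [zmod_mul_eq_zero_iff] at hx
  have hx' : p ∣ x.val * x.val := (dvd_pow_self p one_ne_zero).trans hx
  have hdvd : p ∣ x.val := hp.dvd_of_dvd_pow (n := 2) (by rwa [sq])
  have h1 : p ^ 1 ∣ x.val := by simpa using hdvd
  have h2 : ((x.val : ℕ) : ZMod (p ^ 1)) = 0 := (ZMod.natCast_eq_zero_iff _ _).mpr h1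
  rwa [ZMod.natCast_zmod_val] at h2

end ZModAux

lemma cliqueNumE_le_chromaticNumber {V : Type*} (G : SimpleGraph V) :
    cliqueNumE G ≤ G.chromaticNumber := by
  refine iSup₂_le fun s hs => ?_
  rw [SimpleGraph.chromaticNumber]
  refine le_iInf₂ fun n hn => ?_
  obtain ⟨c⟩ := hn
  have hinj : Set.InjOn c (s : Set V) := by
    intro x hx y hy hxy
    by_contra hne
    exact c.valid (hs hx hy hne) hxy
  have hcard : s.card ≤ n := by
    simpa using Finset.card_le_card_of_injOn (t := (Finset.univ : Finset (Fin n))) c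
      (fun a _ => Finset.mem_univ _) hinj
  exact_mod_cast hcard

theorem stmt13 (k : ℕ) (hk : 1 ≤ k) (p r : Fin k → ℕ)
    (hp : ∀ i, (p i).Prime) (hr : ∀ i, 0 < r i) :
    (gammaGraph (∀ i, ZMod (p i ^ r i))).chromaticNumber =
      cliqueNumE (gammaGraph (∀ i, ZMod (p i ^ r i))) := by
  classical
  haveI instNZ : ∀ i, NeZero (p i ^ r i) := fun i => z_neZero (hp i)
  rcases isEmpty_or_nonempty (zdStar (∀ i, ZMod (p i ^ r i))) with hE | hNE
  · rw [SimpleGraph.chromaticNumber_eq_zero_of_isEmpty]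
    refine le_antisymm (zero_le) (iSup₂_le fun s _ => ?_)
    rw [Finset.eq_empty_of_isEmpty s]
    simp
  -- main case
  have adj_iff : ∀ u v : zdStar (∀ i, ZMod (p i ^ r i)),
      (gammaGraph (∀ i, ZMod (p i ^ r i))).Adj u v ↔
        (u : ∀ i, ZMod (p i ^ r i)) ≠ v ∧ (u : ∀ i, ZMod (p i ^ r i)) * v = 0 :=
    fun u v => Iff.rfl
  set F : Fin k → (∀ i, ZMod (p i ^ r i)) :=
    fun i => Pi.single i ((p i : ZMod (p i ^ r i)) ^ (r i / 2)) with hF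
  have hF_self : ∀ i, F i i = (p i : ZMod (p i ^ r i)) ^ (r i / 2) :=
    fun i => Pi.single_eq_same i _
  have hF_ne : ∀ i j, j ≠ i → F i j = 0 := fun i j h => Pi.single_eq_of_ne h _
  have hFik : ∀ i, F i i ≠ 0 := fun i => by
    rw [hF_self]; exact z_pow_ne_zero (hp i) (Nat.div_lt_self (hr i) one_lt_two)
  have hF0 : ∀ i, F i ≠ 0 := fun i h => hFik i (by rw [h]; rfl)
  have hF_inj : Function.Injective F := by
    intro i j hij
    by_contra hne
    exact hFik i (by rw [hij]; exact hF_ne j i hne)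
  set Cset : Finset (∀ i, ZMod (p i ^ r i)) :=
    Finset.univ.filter (fun x => (x * x = 0 ∧ x ≠ 0) ∨ ∃ i, x = F i) with hCset
  have memC : ∀ x, x ∈ Cset ↔ ((x * x = 0 ∧ x ≠ 0) ∨ ∃ i, x = F i) := by
    intro x; simp [hCset]
  -- every element of Cset is a vertex
  have hvert : ∀ x ∈ Cset, x ∈ zdStar (∀ i, ZMod (p i ^ r i)) := by
    intro x hx
    rcases (memC x).mp hx with ⟨hxx, hx0⟩ | ⟨i, rfl⟩
    · exact ⟨hx0, x, hx0, hxx⟩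
    refine ⟨hF0 i, ?_⟩
    rcases Nat.lt_or_ge (r i) 2 with h1 | h2
    · -- r i = 1
      have hri : r i = 1 := by have := hr i; omega
      obtain ⟨⟨z, hz0, w, hw0, hzw⟩⟩ := hNE
      have hziwi : z i * w i = 0 := by
        have := congrFun hzw i; simpa using this
      have key : ∀ u : ∀ j, ZMod (p j ^ r j), u i = 0 → u ≠ 0 → ∃ y, y ≠ 0 ∧ F i * y = 0 := by
        intro u hui hu0
        refine ⟨u, hu0, funext fun j => ?_⟩
        rcases eq_or_ne j i with rfl | hji
        · simp [hui]
        · simp [hF_ne i j hji]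
      rcases z_high_or_high (hp i) hziwi with hz | hw
      · exact key z (z_low_of_r_eq_one (hp i) hri hz) hz0
      · exact key w (z_low_of_r_eq_one (hp i) hri hw) hw0
    · -- r i ≥ 2
      refine ⟨Pi.single i ((p i : ZMod (p i ^ r i)) ^ (r i - 1)), ?_, funext fun j => ?_⟩
      · intro h
        have := congrFun h i
        rw [Pi.single_eq_same] at this
        exact z_pow_ne_zero (hp i) (show r i - 1 < r i by omega) (by simpa using this)
      · rcases eq_or_ne j i with rfl | hji
        · rw [Pi.mul_apply, hF_self, Pi.single_eq_same, ← pow_add, Pi.zero_apply]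
          exact z_pow_eq_zero (hp j) (show r j ≤ r j / 2 + (r j - 1) by omega)
        · simp [hF_ne i j hji]
  -- pairwise products vanish on Cset
  have hCmul : ∀ x ∈ Cset, ∀ y ∈ Cset, x ≠ y → x * y = 0 := by
    have highF : ∀ (i : Fin k) (x : ∀ j, ZMod (p j ^ r j)), x * x = 0 → x * F i = 0 := by
      intro i x hxx
      funext j
      rcases eq_or_ne j i with rfl | hji
      · rw [Pi.mul_apply, hF_self, Pi.zero_apply]
        have : x j * x j = 0 := by have := congrFun hxx j; simpa using this
        exact z_high_mul_pow (hp j) (hr j) this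
      · simp [hF_ne i j hji]
    intro x hx y hy hxy
    rcases (memC x).mp hx with ⟨hxx, -⟩ | ⟨i, rfl⟩ <;>
      rcases (memC y).mp hy with ⟨hyy, -⟩ | ⟨j, rfl⟩
    · funext l
      have h1 : x l * x l = 0 := by have := congrFun hxx l; simpa using this
      have h2 : y l * y l = 0 := by have := congrFun hyy l; simpa using this
      have := z_high_mul_high (hp l) h1 h2
      simpa using this
    · exact highF j x hxx
    · rw [mul_comm]; exact highF i y hyy
    · have hij : i ≠ j := fun h => hxy (by rw [h])
      funext l
      rcases eq_or_ne l i with rfl | hli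
      · rw [Pi.mul_apply, hF_ne j l hij, mul_zero, Pi.zero_apply]
      · rw [Pi.mul_apply, hF_ne i l hli, zero_mul, Pi.zero_apply]
  -- the clique
  set emb : {x // x ∈ Cset} ↪ zdStar (∀ i, ZMod (p i ^ r i)) :=
    ⟨fun x => ⟨x.1, hvert x.1 x.2⟩, fun a b h => by
      have h2 := congrArg Subtype.val h
      exact Subtype.ext h2⟩ with hemb
  set s : Finset (zdStar (∀ i, ZMod (p i ^ r i))) := Cset.attach.map emb with hs
  have hs_card : s.card = Cset.card := by
    rw [hs, Finset.card_map, Finset.card_attach]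
  have hs_clique : (gammaGraph (∀ i, ZMod (p i ^ r i))).IsClique (s : Set _) := by
    intro u hu v hv huv
    obtain ⟨a, -, rfl⟩ := Finset.mem_map.mp (Finset.mem_coe.mp hu)
    obtain ⟨b, -, rfl⟩ := Finset.mem_map.mp (Finset.mem_coe.mp hv)
    have hne : a.1 ≠ b.1 := by
      intro h
      exact huv (congrArg emb (Subtype.ext h))
    rw [adj_iff]
    exact ⟨hne, hCmul a.1 a.2 b.1 b.2 hne⟩
  -- the coloring
  have hlow_ex : ∀ x : ∀ i, ZMod (p i ^ r i), ¬ x * x = 0 → ∃ i, x i * x i ≠ 0 := by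
    intro x h
    by_contra hc
    push_neg at hc
    exact h (funext fun i => by simpa using hc i)
  have colorable : (gammaGraph (∀ i, ZMod (p i ^ r i))).Colorable Cset.card := by
    set color : (v : zdStar (∀ i, ZMod (p i ^ r i))) → {c // c ∈ Cset} := fun v =>
      if h : (v : ∀ i, ZMod (p i ^ r i)) * v = 0 then
        ⟨(v : ∀ i, ZMod (p i ^ r i)), (memC _).mpr (Or.inl ⟨h, v.2.1⟩)⟩
      else ⟨F (hlow_ex _ h).choose, (memC _).mpr (Or.inr ⟨_, rfl⟩)⟩ with hcolor
    have valid : ∀ u v : zdStar (∀ i, ZMod (p i ^ r i)),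
        (gammaGraph (∀ i, ZMod (p i ^ r i))).Adj u v → color u ≠ color v := by
      intro u v hadj hcv
      rw [adj_iff] at hadj
      obtain ⟨hne, hmul⟩ := hadj
      by_cases hu : (u : ∀ i, ZMod (p i ^ r i)) * u = 0 <;>
        by_cases hv : (v : ∀ i, ZMod (p i ^ r i)) * v = 0
      · rw [hcolor] at hcv
        simp only [dif_pos hu, dif_pos hv, Subtype.mk.injEq] at hcv
        exact hne hcv
      · rw [hcolor] at hcv
        simp only [dif_pos hu, dif_neg hv, Subtype.mk.injEq] at hcv
        have hcv' : (u : ∀ i, ZMod (p i ^ r i)) = F (hlow_ex _ hv).choose := hcv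
        set i := (hlow_ex _ hv).choose with hi
        have hlow : (v : ∀ i, ZMod (p i ^ r i)) i * (v : ∀ i, ZMod (p i ^ r i)) i ≠ 0 :=
          (hlow_ex _ hv).choose_spec
        have : (u : ∀ i, ZMod (p i ^ r i)) i * (v : ∀ i, ZMod (p i ^ r i)) i = 0 := by
          have := congrFun hmul i; simpa using this
        rw [hcv', hF_self] at this
        rw [mul_comm] at this
        exact hlow (z_high_of_mul_pow (hp i) (hr i) this)
      · rw [hcolor] at hcv
        simp only [dif_neg hu, dif_pos hv, Subtype.mk.injEq] at hcv
        have hcv' : F (hlow_ex _ hu).choose = (v : ∀ i, ZMod (p i ^ r i)) := hcv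
        set i := (hlow_ex _ hu).choose with hi
        have hlow : (u : ∀ i, ZMod (p i ^ r i)) i * (u : ∀ i, ZMod (p i ^ r i)) i ≠ 0 :=
          (hlow_ex _ hu).choose_spec
        have : (u : ∀ i, ZMod (p i ^ r i)) i * (v : ∀ i, ZMod (p i ^ r i)) i = 0 := by
          have := congrFun hmul i; simpa using this
        rw [← hcv', hF_self] at this
        exact hlow (z_high_of_mul_pow (hp i) (hr i) this)
      · rw [hcolor] at hcv
        simp only [dif_neg hu, dif_neg hv, Subtype.mk.injEq] at hcv
        have hcv' : F (hlow_ex _ hu).choose = F (hlow_ex _ hv).choose := hcv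
        have hij := hF_inj hcv'
        set i := (hlow_ex _ hu).choose with hi
        have hlowu : (u : ∀ i, ZMod (p i ^ r i)) i * (u : ∀ i, ZMod (p i ^ r i)) i ≠ 0 :=
          (hlow_ex _ hu).choose_spec
        have hlowv : (v : ∀ i, ZMod (p i ^ r i)) i * (v : ∀ i, ZMod (p i ^ r i)) i ≠ 0 := by
          rw [hij]; exact (hlow_ex _ hv).choose_spec
        have hzero : (u : ∀ i, ZMod (p i ^ r i)) i * (v : ∀ i, ZMod (p i ^ r i)) i = 0 := by
          have := congrFun hmul i; simpa using this
        rcases z_high_or_high (hp i) hzero with h | h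
        · exact hlowu h
        · exact hlowv h
    have coloring : (gammaGraph (∀ i, ZMod (p i ^ r i))).Coloring {c // c ∈ Cset} :=
      SimpleGraph.Coloring.mk color (fun {u v} h => valid u v h)
    have := coloring.colorable
    rwa [Fintype.card_coe] at this
  refine le_antisymm (le_trans colorable.chromaticNumber_le ?_)
    (cliqueNumE_le_chromaticNumber _)
  calc (Cset.card : ℕ∞) = (s.card : ℕ∞) := by rw [hs_card]
    _ ≤ cliqueNumE (gammaGraph (∀ i, ZMod (p i ^ r i))) := by
        rw [cliqueNumE]
        exact le_iSup₂ (f := fun (t : Finset (zdStar (∀ i, ZMod (p i ^ r i))))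
          (_ : (gammaGraph (∀ i, ZMod (p i ^ r i))).IsClique (t : Set _)) => (t.card : ℕ∞))
          s hs_clique
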